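/- Let q be a prime power, let V = F_q^n with basis v_1,…,v_n, let 0 < m < n, and set U = ⟨v_{n−m+1},…,v_n⟩. If H ≤ GL_n(q) stabilises U (i.e. (U)h = U for all h ∈ H), then there exists z ∈ SL_n(q) such that D(GL_n(q)) ∩ z⁻¹Hz ≤ Z(GL_n(q)); that is, every matrix in z⁻¹Hz that is diagonal with respect to the basis v_1,…,v_n is scalar. -/
import Mathlib


open Matrix

/-- The general linear group `GL_n(F)`, as the unit group of the matrix ring. -/
abbrev GLn (n : ℕ) (F : Type*) [Field F] := (Matrix (Fin n) (Fin n) F)ˣ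

/-- The conjugate `H^g = g⁻¹ H g` of a subgroup. -/
def conjS {G : Type*} [Group G] (H : Subgroup G) (g : G) : Subgroup G :=
  H.comap (MulAut.conj g).toMonoidHom

/-- `U = ⟨v_{n-m+1}, …, v_n⟩`, the span of the last `m` standard basis vectors of `F^n`. -/
def lastCoords (F : Type*) [Field F] (n m : ℕ) : Submodule F (Fin n → F) :=
  Submodule.span F {w : Fin n → F | ∃ j : Fin n, n - m ≤ (j : ℕ) ∧ w = Pi.single j (1 : F)}

section Aux
variable {F : Type*} [Field F] {n m : ℕ}

/-- The submodule of vectors vanishing on the first `n-m` coordinates. -/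
def firstZero (F : Type*) [Field F] (n m : ℕ) : Submodule F (Fin n → F) where
  carrier := {v | ∀ i : Fin n, (i : ℕ) < n - m → v i = 0}
  add_mem' := by intro a b ha hb i hi; simp [ha i hi, hb i hi]
  zero_mem' := by intro i _; rfl
  smul_mem' := by intro c a ha i hi; simp [ha i hi]

lemma lastCoords_le_firstZero : lastCoords F n m ≤ firstZero F n m := by
  rw [lastCoords, Submodule.span_le]
  rintro w ⟨j, hj, rfl⟩ i hi
  have hij : i ≠ j := by
    intro h; subst h; omega
  simp [Pi.single_eq_of_ne hij]

lemma single_mem_lastCoords {j : Fin n} (hj : n - m ≤ (j : ℕ)) :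
    Pi.single j (1 : F) ∈ lastCoords F n m :=
  Submodule.subset_span ⟨j, hj, rfl⟩

end Aux

/-- If `0 < m < n` and `H ≤ GL_n(q)` stabilises the span `U` of the last
`m` standard basis vectors, then there is `z ∈ SL_n(q)` such that
`D(GL_n(q)) ∩ z⁻¹Hz ≤ Z(GL_n(q))`: every diagonal matrix in `z⁻¹Hz` is scalar. -/
theorem diag_inter_conj_le_scalar {F : Type*} [Field F] [Fintype F] {n m : ℕ}
    (hm : 0 < m) (hmn : m < n) (H : Subgroup (GLn n F))
    (hstab : ∀ h ∈ H, ∀ v ∈ lastCoords F n m,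
      (h : Matrix (Fin n) (Fin n) F) *ᵥ v ∈ lastCoords F n m) :
    ∃ z : GLn n F, (z : Matrix (Fin n) (Fin n) F).det = 1 ∧
      ∀ g ∈ conjS H z,
        (∀ i j, i ≠ j → (g : Matrix (Fin n) (Fin n) F) i j = 0) →
        ∃ c : F, (g : Matrix (Fin n) (Fin n) F) = c • (1 : Matrix (Fin n) (Fin n) F) := by
  classical
  set N : Matrix (Fin n) (Fin n) F :=
    Matrix.of fun i j => if (i : ℕ) < n - m ∧ n - m ≤ (j : ℕ) then (1 : F) else 0 with hNdef
  have hNentry : ∀ i j : Fin n, N i j = if (i : ℕ) < n - m ∧ n - m ≤ (j : ℕ) then (1 : F) else 0 :=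
    fun i j => rfl
  have hN2 : N * N = 0 := by
    ext i j
    rw [Matrix.mul_apply, Matrix.zero_apply]
    apply Finset.sum_eq_zero
    intro k _
    rw [hNentry, hNentry]
    by_cases h1 : (i : ℕ) < n - m ∧ n - m ≤ (k : ℕ)
    · have h2 : ¬ ((k : ℕ) < n - m ∧ n - m ≤ (j : ℕ)) := by omega
      rw [if_neg h2, mul_zero]
    · rw [if_neg h1, zero_mul]
  have hmul1 : (1 + N) * (1 - N) = 1 := by
    rw [one_add_mul, mul_one_sub, hN2, sub_zero, sub_add_cancel]
  have hmul2 : (1 - N) * (1 + N) = 1 := by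
    rw [one_sub_mul, mul_one_add, hN2, add_zero, add_sub_cancel_right]
  refine ⟨⟨1 + N, 1 - N, hmul1, hmul2⟩, ?_, ?_⟩
  · -- determinant
    have hbt : Matrix.BlockTriangular (1 + N) id := by
      intro i j hij
      have hij' : i ≠ j := fun h => absurd (h ▸ hij) (lt_irrefl _)
      have h1 : (1 : Matrix (Fin n) (Fin n) F) i j = 0 := Matrix.one_apply_ne hij'
      have h2 : N i j = 0 := by
        rw [hNentry, if_neg]
        simp only [id] at hij
        omega
      show (1 + N) i j = 0
      rw [Matrix.add_apply, h1, h2, add_zero]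
    have := Matrix.det_of_upperTriangular hbt
    rw [Units.val_mk] at *
    rw [this]
    apply Finset.prod_eq_one
    intro i _
    have h2 : N i i = 0 := by rw [hNentry, if_neg]; omega
    rw [Matrix.add_apply, h2, add_zero, Matrix.one_apply_eq]
  · intro g hg hdiag
    -- zgz⁻¹ ∈ H
    have hmem : (⟨1 + N, 1 - N, hmul1, hmul2⟩ : GLn n F) * g *
        (⟨1 + N, 1 - N, hmul1, hmul2⟩ : GLn n F)⁻¹ ∈ H := hg
    set G : Matrix (Fin n) (Fin n) F := (g : Matrix (Fin n) (Fin n) F) with hG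
    have hGN : ∀ i j, (G * N) i j = G i i * N i j := by
      intro i j
      rw [Matrix.mul_apply]
      rw [Finset.sum_eq_single i]
      · intro k _ hk; rw [hdiag i k (Ne.symm hk), zero_mul]
      · intro h; exact absurd (Finset.mem_univ i) h
    have hNG : ∀ i j, (N * G) i j = N i j * G j j := by
      intro i j
      rw [Matrix.mul_apply]
      rw [Finset.sum_eq_single j]
      · intro k _ hk; rw [hdiag k j hk, mul_zero]
      · intro h; exact absurd (Finset.mem_univ j) h
    have hNGN : N * (G * N) = 0 := by
      ext i j
      rw [Matrix.mul_apply, Matrix.zero_apply]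
      apply Finset.sum_eq_zero
      intro k _
      by_cases h1 : n - m ≤ (k : ℕ)
      · rw [hGN, hNentry k j, if_neg (by omega : ¬ ((k : ℕ) < n - m ∧ n - m ≤ (j : ℕ))),
          mul_zero, mul_zero]
      · rw [hNentry i k, if_neg (by omega : ¬ ((i : ℕ) < n - m ∧ n - m ≤ (k : ℕ))), zero_mul]
    set M : Matrix (Fin n) (Fin n) F := (1 + N) * G * (1 - N) with hM
    have hMval : M = G + N * G - G * N - N * (G * N) := by
      rw [hM]; noncomm_ring
    have hMentry : ∀ i j : Fin n, (i : ℕ) < n - m → n - m ≤ (j : ℕ) →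
        M i j = G j j - G i i := by
      intro i j hi hj
      have hij : i ≠ j := fun h => by subst h; omega
      rw [hMval, hNGN]
      simp only [Matrix.sub_apply, Matrix.add_apply, Matrix.zero_apply]
      rw [hGN, hNG, hdiag i j hij, hNentry]
      simp [hi, hj]
    -- stabilization: M i j = 0 for i < n-m ≤ j
    have hMzero : ∀ i j : Fin n, (i : ℕ) < n - m → n - m ≤ (j : ℕ) → M i j = 0 := by
      intro i j hi hj
      have h1 := hstab _ hmem (Pi.single j 1) (single_mem_lastCoords hj)
      have h2 : ((((⟨1 + N, 1 - N, hmul1, hmul2⟩ : GLn n F) * g *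
          (⟨1 + N, 1 - N, hmul1, hmul2⟩ : GLn n F)⁻¹ : GLn n F)) :
          Matrix (Fin n) (Fin n) F) = M := by
        rw [hM]; rfl
      rw [h2] at h1
      have h3 := lastCoords_le_firstZero h1 i hi
      have h4 : (M *ᵥ Pi.single j 1) i = M i j := by
        rw [Matrix.mulVec, dotProduct]
        rw [Finset.sum_eq_single j]
        · rw [Pi.single_eq_same, mul_one]
        · intro k _ hk; rw [Pi.single_eq_of_ne hk, mul_zero]
        · intro h; exact absurd (Finset.mem_univ j) h
      rw [h4] at h3
      exact h3
    have hne : 0 < n - m := by omega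
    have hd : ∀ i j : Fin n, (i : ℕ) < n - m → n - m ≤ (j : ℕ) → G i i = G j j := by
      intro i j hi hj
      have := hMzero i j hi hj
      rw [hMentry i j hi hj] at this
      exact (sub_eq_zero.mp this).symm
    set i0 : Fin n := ⟨0, by omega⟩
    set j0 : Fin n := ⟨n - 1, by omega⟩
    have hi0 : (i0 : ℕ) < n - m := by simp [i0]; omega
    have hj0 : n - m ≤ (j0 : ℕ) := by simp [j0]; omega
    refine ⟨G i0 i0, ?_⟩
    ext i j
    by_cases hij : i = j
    · subst hij
      simp only [Matrix.smul_apply, Matrix.one_apply_eq, smul_eq_mul, mul_one]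
      by_cases h : (i : ℕ) < n - m
      · rw [hd i j0 h hj0, hd i0 j0 hi0 hj0]
      · exact (hd i0 i hi0 (by omega)).symm
    · rw [hdiag i j hij, Matrix.smul_apply, Matrix.one_apply_ne hij, smul_zero]
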